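/- For c > 0 define f_c : (−1/√2, 1/√2) → ℝ by f_c(x) = −√(1 − x²) + c·exp(−(0.02/(x + 1/√2)² + 0.02/(x − 1/√2)²)). There exists c > 0 (approximately 1.18264) such that the set {x : 0 < x < 1/√2 and f_c(x) = √(1 − x²) − 2x} has exactly one element; that is, for this value of c the graph of f_c meets the side y = √(1 − x²) − 2x of the triangle in a unique point apart from the endpoint. -/

import Mathlib

set_option maxHeartbeats 2000000
set_option linter.unusedVariables false

open Real Set

noncomputable def aa : ℝ := 1 / Real.sqrt 2
noncomputable def ee (x : ℝ) : ℝ := 0.02 / (x + aa) ^ 2 + 0.02 / (x - aa) ^ 2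
noncomputable def gg (x : ℝ) : ℝ := 2 * (Real.sqrt (1 - x ^ 2) - x) * Real.exp (ee x)
noncomputable def ep (x : ℝ) : ℝ := -0.04 / (x + aa) ^ 3 - 0.04 / (x - aa) ^ 3
noncomputable def epp (x : ℝ) : ℝ := 0.12 / (x + aa) ^ 4 + 0.12 / (x - aa) ^ 4
noncomputable def gg1 (x : ℝ) : ℝ :=
  2 * Real.exp (ee x) * ((-x / Real.sqrt (1 - x ^ 2) - 1) + (Real.sqrt (1 - x ^ 2) - x) * ep x)
noncomputable def gg2 (x : ℝ) : ℝ :=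
  2 * Real.exp (ee x) * (-1 / Real.sqrt (1 - x ^ 2) ^ 3
    + 2 * (-x / Real.sqrt (1 - x ^ 2) - 1) * ep x
    + (Real.sqrt (1 - x ^ 2) - x) * ((ep x) ^ 2 + epp x))


lemma aa_sq : aa ^ 2 = 1 / 2 := by
  rw [aa, div_pow, one_pow, sq_sqrt (by norm_num : (0:ℝ) ≤ 2)]
lemma aa_pos : 0 < aa := by rw [aa]; positivity
lemma aa_lb : (0.70710678 : ℝ) ≤ aa := by nlinarith [aa_sq, aa_pos]
lemma aa_ub : aa ≤ (0.70710679 : ℝ) := by nlinarith [aa_sq, aa_pos]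

lemma sqrt_lb {v l : ℝ} (h0 : 0 ≤ l) (hl : l ^ 2 ≤ v) : l ≤ Real.sqrt v := by
  nlinarith [Real.sq_sqrt (le_trans (by positivity) hl), Real.sqrt_nonneg v]
lemma sqrt_ub {v u : ℝ} (h0 : 0 ≤ v) (hu : v ≤ u ^ 2) (hu0 : 0 ≤ u) : Real.sqrt v ≤ u := by
  nlinarith [Real.sq_sqrt h0, Real.sqrt_nonneg v]

lemma exp_lb7 {y : ℝ} (h : 0 ≤ y) :
    1 + y + y ^ 2 / 2 + y ^ 3 / 6 + y ^ 4 / 24 + y ^ 5 / 120 + y ^ 6 / 720 + y ^ 7 / 5040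
      ≤ Real.exp y := by
  have := Real.sum_le_exp_of_nonneg h 8
  rw [Finset.sum_range_succ, Finset.sum_range_succ, Finset.sum_range_succ,
    Finset.sum_range_succ, Finset.sum_range_succ, Finset.sum_range_succ,
    Finset.sum_range_succ, Finset.sum_range_succ] at this
  norm_num [Nat.factorial] at this
  linarith

lemma exp_ub8 {y : ℝ} (h0 : 0 ≤ y) (h1 : y ≤ 1) :
    Real.exp y ≤ 1 + y + y ^ 2 / 2 + y ^ 3 / 6 + y ^ 4 / 24 + y ^ 5 / 120 + y ^ 6 / 720
      + y ^ 7 / 5040 + y ^ 8 * 9 / 322560 := by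
  have := Real.exp_bound' h0 h1 (n := 8) (by norm_num)
  rw [Finset.sum_range_succ, Finset.sum_range_succ, Finset.sum_range_succ,
    Finset.sum_range_succ, Finset.sum_range_succ, Finset.sum_range_succ,
    Finset.sum_range_succ, Finset.sum_range_succ] at this
  norm_num [Nat.factorial] at this
  linarith

/-- master lower bound for `gg` on `[p, q]`. -/
lemma gg_lower {p q sl e L x : ℝ}
    (hx1 : p ≤ x) (hx2 : x ≤ q) (hp : 0 ≤ p) (hq : q ≤ 0.707)
    (hsl0 : 0 ≤ sl) (hsl : sl ^ 2 ≤ 1 - q ^ 2) (hslq : q ≤ sl)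
    (he0 : 0 ≤ e)
    (he : e ≤ 0.02 / (q + 0.70710679) ^ 2 + 0.02 / (0.70710679 - p) ^ 2)
    (hL : L ≤ 2 * (sl - q) *
      (1 + e + e ^ 2 / 2 + e ^ 3 / 6 + e ^ 4 / 24 + e ^ 5 / 120 + e ^ 6 / 720 + e ^ 7 / 5040)) :
    L ≤ gg x := by
  have haL := aa_lb; have haU := aa_ub
  have hx0 : 0 ≤ x := le_trans hp hx1
  have hs : sl ≤ Real.sqrt (1 - x ^ 2) := sqrt_lb hsl0 (by nlinarith)
  -- bound ee x from below by e
  have h1 : 0.02 / (x + aa) ^ 2 ≥ 0.02 / (q + 0.70710679) ^ 2 := by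
    apply div_le_div_of_nonneg_left (by norm_num) (by positivity)
    nlinarith [aa_pos]
  have h2 : 0.02 / (x - aa) ^ 2 ≥ 0.02 / (0.70710679 - p) ^ 2 := by
    apply div_le_div_of_nonneg_left (by norm_num) _ _
    · nlinarith
    · nlinarith
  have hee : e ≤ ee x := by rw [ee]; linarith
  have heeexp : Real.exp e ≤ Real.exp (ee x) := Real.exp_le_exp.mpr hee
  have hT := exp_lb7 he0
  have hpos : (0:ℝ) ≤ 2 * (sl - q) := by linarith
  calc L ≤ 2 * (sl - q) * (1 + e + e ^ 2 / 2 + e ^ 3 / 6 + e ^ 4 / 24 + e ^ 5 / 120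
        + e ^ 6 / 720 + e ^ 7 / 5040) := hL
    _ ≤ 2 * (Real.sqrt (1 - x ^ 2) - x) * Real.exp (ee x) := by
        apply mul_le_mul
        · linarith
        · linarith
        · positivity
        · nlinarith [Real.sqrt_nonneg (1 - x ^ 2)]
    _ = gg x := rfl

/-- master upper bound for `gg` at a point. -/
lemma gg_upper {x su e U : ℝ}
    (hx0 : 0 ≤ x) (hx : x ≤ 0.62)
    (hsu : 1 - x ^ 2 ≤ su ^ 2) (hsu0 : 0 ≤ su)
    (he1 : e ≤ 1)
    (he : 0.02 / (x + 0.70710678) ^ 2 + 0.02 / (0.70710678 - x) ^ 2 ≤ e)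
    (hU : 2 * (su - x) * (1 + e + e ^ 2 / 2 + e ^ 3 / 6 + e ^ 4 / 24 + e ^ 5 / 120 + e ^ 6 / 720
      + e ^ 7 / 5040 + e ^ 8 * 9 / 322560) ≤ U) :
    gg x ≤ U := by
  have haL := aa_lb; have haU := aa_ub
  have hs : Real.sqrt (1 - x ^ 2) ≤ su := sqrt_ub (by nlinarith) hsu hsu0
  have he0 : 0 ≤ e := le_trans (by positivity) he
  have h1 : 0.02 / (x + aa) ^ 2 ≤ 0.02 / (x + 0.70710678) ^ 2 := by
    apply div_le_div_of_nonneg_left (by norm_num) (by positivity)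
    nlinarith
  have h2 : 0.02 / (x - aa) ^ 2 ≤ 0.02 / (0.70710678 - x) ^ 2 := by
    apply div_le_div_of_nonneg_left (by norm_num) _ _
    · nlinarith
    · nlinarith
  have hee : ee x ≤ e := by rw [ee]; linarith
  have hexp : Real.exp (ee x) ≤ Real.exp e := Real.exp_le_exp.mpr hee
  have hT := exp_ub8 he0 he1
  have hsx : x ≤ Real.sqrt (1 - x ^ 2) := by
    have := sqrt_lb (show (0:ℝ) ≤ 0.78 by norm_num)
      (show (0.78:ℝ) ^ 2 ≤ 1 - x ^ 2 by nlinarith)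
    linarith
  calc gg x = 2 * (Real.sqrt (1 - x ^ 2) - x) * Real.exp (ee x) := rfl
    _ ≤ 2 * (su - x) * (1 + e + e ^ 2 / 2 + e ^ 3 / 6 + e ^ 4 / 24 + e ^ 5 / 120 + e ^ 6 / 720
        + e ^ 7 / 5040 + e ^ 8 * 9 / 322560) := by
        apply mul_le_mul
        · linarith
        · linarith [Real.exp_pos (ee x)]
        · positivity
        · nlinarith
    _ ≤ U := hU

/-- tail: on `[0.62, aa)` the function is large. -/
lemma gg_tail {x : ℝ} (h1 : 0.62 ≤ x) (h2 : x < aa) : 1.19 < gg x := by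
  have haL := aa_lb; have haU := aa_ub
  set T := aa - x with hTdef
  have hT0 : 0 < T := by simp [hTdef]; linarith
  have hT : T ≤ 0.0872 := by simp [hTdef]; linarith
  have hx0 : (0:ℝ) < x := by linarith
  set s := Real.sqrt (1 - x ^ 2) with hsdef
  have hs2 : s ^ 2 = 1 - x ^ 2 := Real.sq_sqrt (by nlinarith [aa_sq])
  have hs0 : 0 ≤ s := Real.sqrt_nonneg _
  have hs1 : s ≤ 1 := sqrt_ub (by nlinarith [aa_sq]) (by nlinarith) (by norm_num)
  have hkey : (s - x) * (s + x) = 2 * T * (aa + x) := by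
    have : (s - x) * (s + x) = s ^ 2 - x ^ 2 := by ring
    rw [this, hs2]
    nlinarith [aa_sq]
  have hsx : 0 < s - x := by nlinarith [aa_sq, aa_pos]
  have hlow : 1.55 * T ≤ s - x := by nlinarith
  -- exp part
  have hT2 : (x - aa) ^ 2 = T ^ 2 := by ring
  have heelb : 0.02 / T ^ 2 ≤ ee x := by
    rw [ee, hT2]
    have : 0 ≤ 0.02 / (x + aa) ^ 2 := by positivity
    linarith
  have y := 0.02 / T ^ 2
  have hexp : Real.exp (0.02 / T ^ 2) ≤ Real.exp (ee x) := Real.exp_le_exp.mpr heelb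
  have hy0 : (0:ℝ) ≤ 0.02 / T ^ 2 := by positivity
  have htay := exp_lb7 hy0
  -- bounds on T*y and T*y^2
  have hTy : 0.2293 ≤ T * (0.02 / T ^ 2) := by
    rw [show T * (0.02 / T ^ 2) = 0.02 / T by field_simp]
    rw [le_div_iff₀ hT0]; nlinarith
  have hTy2 : 0.6032 ≤ T * (0.02 / T ^ 2) ^ 2 := by
    rw [show T * (0.02 / T ^ 2) ^ 2 = 0.0004 / T ^ 3 by field_simp; ring]
    rw [le_div_iff₀ (by positivity)]; nlinarith
  have hfin : 1.19 < 2 * (1.55 * T) * (1 + (0.02 / T ^ 2) + (0.02 / T ^ 2) ^ 2 / 2) := by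
    nlinarith
  calc (1.19:ℝ) < 2 * (1.55 * T) * (1 + (0.02 / T ^ 2) + (0.02 / T ^ 2) ^ 2 / 2) := hfin
    _ ≤ 2 * (s - x) * Real.exp (ee x) := by
        apply mul_le_mul
        · linarith
        · nlinarith [pow_nonneg hy0 3, pow_nonneg hy0 4, pow_nonneg hy0 5,
            pow_nonneg hy0 6, pow_nonneg hy0 7]
        · positivity
        · linarith
    _ = gg x := rfl

lemma pt1 : (1.182744 : ℝ) ≤ gg 0.4935 :=
  gg_lower (p := 0.4935) (q := 0.4935) (sl := 0.86974579) (e := 0.4522035)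
    le_rfl le_rfl (by norm_num) (by norm_num) (by norm_num) (by norm_num) (by norm_num)
    (by norm_num) (by norm_num) (by norm_num)

lemma pt2 : gg 0.4945 ≤ (1.182667 : ℝ) :=
  gg_upper (su := 0.86917763) (e := 0.4563139)
    (by norm_num) (by norm_num) (by norm_num) (by norm_num) (by norm_num) (by norm_num)
    (by norm_num)

lemma pt3 : (1.182743 : ℝ) ≤ gg 0.498 :=
  gg_lower (p := 0.498) (q := 0.498) (sl := 0.86717702) (e := 0.4711688)
    le_rfl le_rfl (by norm_num) (by norm_num) (by norm_num) (by norm_num) (by norm_num)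
    (by norm_num) (by norm_num) (by norm_num)

lemma pt4 : gg 0.5 ≤ (1.183049 : ℝ) :=
  gg_upper (su := 0.86602541) (e := 0.4800001)
    (by norm_num) (by norm_num) (by norm_num) (by norm_num) (by norm_num) (by norm_num)
    (by norm_num)

lemma left1 {x : ℝ} (h1 : 0 ≤ x) (h2 : x ≤ 0.352) : (1.19:ℝ) < gg x := by
  have := gg_lower (p := 0) (q := 0.352) (sl := 0.936) (e := 0.057829) (L := 1.2)
    h1 h2 le_rfl (by norm_num) (by norm_num) (by norm_num) (by norm_num) (by norm_num)
    (by norm_num) (by norm_num)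
  linarith

lemma left2 {x : ℝ} (h1 : 0.352 ≤ x) (h2 : x ≤ 0.41) : (1.19:ℝ) < gg x := by
  have := gg_lower (p := 0.352) (q := 0.41) (sl := 0.9120855) (e := 0.174629) (L := 1.195)
    h1 h2 (by norm_num) (by norm_num) (by norm_num) (by norm_num) (by norm_num) (by norm_num)
    (by norm_num) (by norm_num)
  linarith

lemma left3 {x : ℝ} (h1 : 0.41 ≤ x) (h2 : x ≤ 0.43) : (1.19:ℝ) < gg x := by
  have := gg_lower (p := 0.41) (q := 0.43) (sl := 0.9028288) (e := 0.242039) (L := 1.2)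
    h1 h2 (by norm_num) (by norm_num) (by norm_num) (by norm_num) (by norm_num) (by norm_num)
    (by norm_num) (by norm_num)
  linarith

lemma left4 {x : ℝ} (h1 : 0.43 ≤ x) (h2 : x ≤ 0.44) : (1.19:ℝ) < gg x := by
  have := gg_lower (p := 0.43) (q := 0.44) (sl := 0.8979977) (e := 0.275656) (L := 1.2)
    h1 h2 (by norm_num) (by norm_num) (by norm_num) (by norm_num) (by norm_num) (by norm_num)
    (by norm_num) (by norm_num)
  linarith

section deriv
variable {x : ℝ} (hx : x ∈ Ioo (0.4:ℝ) 0.65)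

lemma hxa_pos (hx : x ∈ Ioo (0.4:ℝ) 0.65) : 0 < x + aa := by
  have := aa_pos; linarith [hx.1]
lemma hxa_neg (hx : x ∈ Ioo (0.4:ℝ) 0.65) : x - aa < 0 := by
  have := aa_lb; linarith [hx.2]
lemma hsub_pos (hx : x ∈ Ioo (0.4:ℝ) 0.65) : 0 < 1 - x ^ 2 := by
  nlinarith [hx.1, hx.2]

lemma ee_hasDeriv (hx : x ∈ Ioo (0.4:ℝ) 0.65) : HasDerivAt ee (ep x) x := by
  have h1 : (x + aa) ≠ 0 := ne_of_gt (hxa_pos hx)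
  have h2 : (x - aa) ≠ 0 := ne_of_lt (hxa_neg hx)
  have d1 : HasDerivAt (fun y : ℝ => (y + aa) ^ 2) (2 * (x + aa)) x := by
    simpa using ((hasDerivAt_id x).add_const aa).fun_pow 2
  have d2 : HasDerivAt (fun y : ℝ => (y - aa) ^ 2) (2 * (x - aa)) x := by
    simpa using ((hasDerivAt_id x).sub_const aa).fun_pow 2
  have i1 : HasDerivAt (fun y : ℝ => 0.02 / (y + aa) ^ 2)
      ((0 * (x + aa) ^ 2 - 0.02 * (2 * (x + aa))) / ((x + aa) ^ 2) ^ 2) x :=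
    (hasDerivAt_const x (0.02:ℝ)).div d1 (pow_ne_zero 2 h1)
  have i2 : HasDerivAt (fun y : ℝ => 0.02 / (y - aa) ^ 2)
      ((0 * (x - aa) ^ 2 - 0.02 * (2 * (x - aa))) / ((x - aa) ^ 2) ^ 2) x :=
    (hasDerivAt_const x (0.02:ℝ)).div d2 (pow_ne_zero 2 h2)
  have := i1.add i2
  rw [show ee = fun y : ℝ => 0.02 / (y + aa) ^ 2 + 0.02 / (y - aa) ^ 2 from rfl]
  refine this.congr_deriv (Eq.symm ?_)
  rw [ep]
  field_simp
  ring

lemma sqrt_hasDeriv (hx : x ∈ Ioo (0.4:ℝ) 0.65) :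
    HasDerivAt (fun y : ℝ => Real.sqrt (1 - y ^ 2)) (-x / Real.sqrt (1 - x ^ 2)) x := by
  have h0 : 0 < 1 - x ^ 2 := hsub_pos hx
  have d1 : HasDerivAt (fun y : ℝ => 1 - y ^ 2) (-(2 * x)) x := by
    simpa using ((hasDerivAt_pow 2 x).const_sub 1)
  have := d1.sqrt (ne_of_gt h0)
  convert this using 1
  ring

lemma gg_hasDeriv (hx : x ∈ Ioo (0.4:ℝ) 0.65) : HasDerivAt gg (gg1 x) x := by
  have hu : HasDerivAt (fun y : ℝ => Real.sqrt (1 - y ^ 2) - y)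
      (-x / Real.sqrt (1 - x ^ 2) - 1) x := (sqrt_hasDeriv hx).sub (hasDerivAt_id x)
  have hexp : HasDerivAt (fun y : ℝ => Real.exp (ee y)) (Real.exp (ee x) * ep x) x :=
    (ee_hasDeriv hx).exp
  have := (hu.const_mul 2).mul hexp
  rw [show gg = fun y : ℝ => (2 * (Real.sqrt (1 - y ^ 2) - y)) * Real.exp (ee y) by
    funext y; simp only [gg]; try ring]
  refine this.congr_deriv (Eq.symm ?_)
  rw [gg1]
  ring

lemma ep_hasDeriv (hx : x ∈ Ioo (0.4:ℝ) 0.65) : HasDerivAt ep (epp x) x := by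
  have h1 : (x + aa) ≠ 0 := ne_of_gt (hxa_pos hx)
  have h2 : (x - aa) ≠ 0 := ne_of_lt (hxa_neg hx)
  have d1 : HasDerivAt (fun y : ℝ => (y + aa) ^ 3) (3 * (x + aa) ^ 2) x := by
    simpa using ((hasDerivAt_id x).add_const aa).fun_pow 3
  have d2 : HasDerivAt (fun y : ℝ => (y - aa) ^ 3) (3 * (x - aa) ^ 2) x := by
    simpa using ((hasDerivAt_id x).sub_const aa).fun_pow 3
  have i1 : HasDerivAt (fun y : ℝ => -0.04 / (y + aa) ^ 3)
      ((0 * (x + aa) ^ 3 - (-0.04) * (3 * (x + aa) ^ 2)) / ((x + aa) ^ 3) ^ 2) x :=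
    (hasDerivAt_const x (-0.04:ℝ)).div d1 (pow_ne_zero 3 h1)
  have i2 : HasDerivAt (fun y : ℝ => 0.04 / (y - aa) ^ 3)
      ((0 * (x - aa) ^ 3 - 0.04 * (3 * (x - aa) ^ 2)) / ((x - aa) ^ 3) ^ 2) x :=
    (hasDerivAt_const x (0.04:ℝ)).div d2 (pow_ne_zero 3 h2)
  have := i1.sub i2
  rw [show ep = fun y : ℝ => -0.04 / (y + aa) ^ 3 - 0.04 / (y - aa) ^ 3 from rfl]
  refine this.congr_deriv (Eq.symm ?_)
  rw [epp]
  field_simp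
  ring

lemma gg1_hasDeriv (hx : x ∈ Ioo (0.4:ℝ) 0.65) : HasDerivAt gg1 (gg2 x) x := by
  have h0 : 0 < 1 - x ^ 2 := hsub_pos hx
  have hs : 0 < Real.sqrt (1 - x ^ 2) := Real.sqrt_pos.mpr h0
  have hs2 : Real.sqrt (1 - x ^ 2) ^ 2 = 1 - x ^ 2 := Real.sq_sqrt (le_of_lt h0)
  have hq1 : HasDerivAt (fun y : ℝ => -y / Real.sqrt (1 - y ^ 2) - 1)
      (-1 / Real.sqrt (1 - x ^ 2) ^ 3) x := by
    have hdiv : HasDerivAt (fun y : ℝ => -y / Real.sqrt (1 - y ^ 2))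
        (((-1) * Real.sqrt (1 - x ^ 2) - (-x) * (-x / Real.sqrt (1 - x ^ 2)))
          / Real.sqrt (1 - x ^ 2) ^ 2) x :=
      ((hasDerivAt_id x).neg).div (sqrt_hasDeriv hx) (ne_of_gt hs)
    have := hdiv.sub_const 1
    refine this.congr_deriv (Eq.symm ?_)
    rw [div_eq_div_iff (by positivity) (by positivity)]
    field_simp
    nlinarith [hs2, hs]
  have hu : HasDerivAt (fun y : ℝ => Real.sqrt (1 - y ^ 2) - y)
      (-x / Real.sqrt (1 - x ^ 2) - 1) x := (sqrt_hasDeriv hx).sub (hasDerivAt_id x)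
  have hw : HasDerivAt
      (fun y : ℝ => (-y / Real.sqrt (1 - y ^ 2) - 1) + (Real.sqrt (1 - y ^ 2) - y) * ep y)
      ((-1 / Real.sqrt (1 - x ^ 2) ^ 3)
        + ((-x / Real.sqrt (1 - x ^ 2) - 1) * ep x
          + (Real.sqrt (1 - x ^ 2) - x) * epp x)) x :=
    hq1.add (hu.mul (ep_hasDeriv hx))
  have hexp : HasDerivAt (fun y : ℝ => 2 * Real.exp (ee y)) (2 * (Real.exp (ee x) * ep x)) x :=
    ((ee_hasDeriv hx).exp).const_mul 2
  have := hexp.mul hw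
  rw [show gg1 = fun y : ℝ => (2 * Real.exp (ee y)) *
    ((-y / Real.sqrt (1 - y ^ 2) - 1) + (Real.sqrt (1 - y ^ 2) - y) * ep y) from rfl]
  refine this.congr_deriv (Eq.symm ?_)
  rw [gg2]
  ring

end deriv

lemma gg2_pos {p q sl epL epU eppL x : ℝ}
    (hx1 : p ≤ x) (hx2 : x ≤ q) (hp : 0.44 ≤ p) (hq : q ≤ 0.62)
    (hsl0 : 0 < sl) (hsl : sl ^ 2 ≤ 1 - q ^ 2) (hslq : q < sl)
    (hepL0 : 0 ≤ epL) (heppL0 : 0 ≤ eppL)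
    (hepL : epL ≤ 0.04 / (0.70710679 - p) ^ 3 - 0.04 / (p + 0.70710678) ^ 3)
    (hepU : 0.04 / (0.70710678 - q) ^ 3 - 0.04 / (q + 0.70710679) ^ 3 ≤ epU)
    (heppL : eppL ≤ 0.12 / (q + 0.70710679) ^ 4 + 0.12 / (0.70710679 - p) ^ 4)
    (hfin : 0 < -1 / sl ^ 3 + 2 * (-q / sl - 1) * epU + (sl - q) * (epL ^ 2 + eppL)) :
    0 < gg2 x := by
  have haL := aa_lb; have haU := aa_ub; have ha0 := aa_pos
  set s := Real.sqrt (1 - x ^ 2) with hsdef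
  have hs : sl ≤ s := sqrt_lb (le_of_lt hsl0) (by nlinarith)
  have hs0 : 0 < s := lt_of_lt_of_le hsl0 hs
  have hx0 : (0:ℝ) < x := by linarith
  have hax : 0 < aa - x := by linarith
  have hxa : 0 < x + aa := by linarith
  -- term 1
  have t1 : -1 / sl ^ 3 ≤ -1 / s ^ 3 := by
    rw [neg_div, neg_div, neg_le_neg_iff]
    exact div_le_div_of_nonneg_left (by norm_num) (by positivity)
      (pow_le_pow_left₀ (le_of_lt hsl0) hs 3)
  -- u' bounds
  have hdivdiv : x / s ≤ q / sl := div_le_div₀ (by linarith) hx2 hsl0 hs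
  have hu'lb : -q / sl - 1 ≤ -x / s - 1 := by
    rw [neg_div, neg_div]; linarith
  have hxs0 : 0 ≤ x / s := div_nonneg (le_of_lt hx0) (le_of_lt hs0)
  have hu'ub : -x / s - 1 ≤ 0 := by rw [neg_div]; linarith
  -- ep bounds
  have hrw : ep x = 0.04 / (aa - x) ^ 3 - 0.04 / (x + aa) ^ 3 := by
    rw [ep, show (x - aa) ^ 3 = -((aa - x) ^ 3) by ring, div_neg]
    ring
  have hepxU : ep x ≤ epU := by
    rw [hrw]
    have b1 : 0.04 / (aa - x) ^ 3 ≤ 0.04 / (0.70710678 - q) ^ 3 :=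
      div_le_div_of_nonneg_left (by norm_num) (pow_pos (by linarith) 3)
        (pow_le_pow_left₀ (by linarith) (by linarith) 3)
    have b2 : 0.04 / (q + 0.70710679) ^ 3 ≤ 0.04 / (x + aa) ^ 3 :=
      div_le_div_of_nonneg_left (by norm_num) (pow_pos hxa 3)
        (pow_le_pow_left₀ (by linarith) (by linarith) 3)
    linarith
  have hepxL : epL ≤ ep x := by
    rw [hrw]
    have b1 : 0.04 / (0.70710679 - p) ^ 3 ≤ 0.04 / (aa - x) ^ 3 :=
      div_le_div_of_nonneg_left (by norm_num) (pow_pos hax 3)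
        (pow_le_pow_left₀ (by linarith) (by linarith) 3)
    have b2 : 0.04 / (x + aa) ^ 3 ≤ 0.04 / (p + 0.70710678) ^ 3 :=
      div_le_div_of_nonneg_left (by norm_num) (pow_pos (by linarith) 3)
        (pow_le_pow_left₀ (by linarith) (by linarith) 3)
    linarith
  -- epp bound
  have heppxL : eppL ≤ epp x := by
    rw [epp, show (x - aa) ^ 4 = (aa - x) ^ 4 by ring]
    have b1 : 0.12 / (q + 0.70710679) ^ 4 ≤ 0.12 / (x + aa) ^ 4 :=
      div_le_div_of_nonneg_left (by norm_num) (pow_pos hxa 4)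
        (pow_le_pow_left₀ (by linarith) (by linarith) 4)
    have b2 : 0.12 / (0.70710679 - p) ^ 4 ≤ 0.12 / (aa - x) ^ 4 :=
      div_le_div_of_nonneg_left (by norm_num) (pow_pos hax 4)
        (pow_le_pow_left₀ (by linarith) (by linarith) 4)
    linarith
  -- assemble
  have hepU0 : 0 ≤ epU := le_trans (le_trans hepL0 hepxL) hepxU
  have t2 : 2 * (-q / sl - 1) * epU ≤ 2 * (-x / s - 1) * ep x := by
    have h1 : (-x / s - 1) * ep x ≥ (-x / s - 1) * epU :=
      mul_le_mul_of_nonpos_left hepxU hu'ub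
    have h2 : (-x / s - 1) * epU ≥ (-q / sl - 1) * epU :=
      mul_le_mul_of_nonneg_right hu'lb hepU0
    linarith
  have t3 : (sl - q) * (epL ^ 2 + eppL) ≤ (s - x) * ((ep x) ^ 2 + epp x) := by
    apply mul_le_mul
    · linarith
    · nlinarith [hepxL, hepL0, heppxL]
    · nlinarith
    · linarith
  have hbr : 0 < -1 / s ^ 3 + 2 * (-x / s - 1) * ep x + (s - x) * ((ep x) ^ 2 + epp x) := by
    linarith
  rw [gg2]
  exact mul_pos (by positivity) hbr

lemma conv1 {x : ℝ} (h1 : 0.44 ≤ x) (h2 : x ≤ 0.47) : 0 < gg2 x :=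
  gg2_pos (p := 0.44) (q := 0.47) (sl := 0.8826664) (epL := 2.0724648) (epU := 2.9762128)
    (eppL := 23.6369534) h1 h2 (by norm_num) (by norm_num) (by norm_num) (by norm_num)
    (by norm_num) (by norm_num) (by norm_num) (by norm_num) (by norm_num) (by norm_num)
    (by norm_num)

lemma conv2 {x : ℝ} (h1 : (0.47:ℝ) ≤ x) (h2 : x ≤ 0.5016) : 0 < gg2 x :=
  gg2_pos (p := 0.47) (q := 0.5016) (sl := 0.8650996) (epL := 2.9762123) (epU := 4.5860813)
    (eppL := 38.0231334) h1 h2 (by norm_num) (by norm_num) (by norm_num) (by norm_num)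
    (by norm_num) (by norm_num) (by norm_num) (by norm_num) (by norm_num) (by norm_num)
    (by norm_num)

lemma conv3 {x : ℝ} (h1 : (0.5016:ℝ) ≤ x) (h2 : x ≤ 0.533) : 0 < gg2 x :=
  gg2_pos (p := 0.5016) (q := 0.533) (sl := 0.8461152) (epL := 4.5860805) (epU := 7.558044)
    (eppL := 67.329277) h1 h2 (by norm_num) (by norm_num) (by norm_num) (by norm_num)
    (by norm_num) (by norm_num) (by norm_num) (by norm_num) (by norm_num) (by norm_num)
    (by norm_num)

lemma conv4 {x : ℝ} (h1 : (0.533:ℝ) ≤ x) (h2 : x ≤ 0.5612) : 0 < gg2 x :=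
  gg2_pos (p := 0.533) (q := 0.5612) (sl := 0.8276802) (epL := 7.5580426) (epU := 12.8579538)
    (eppL := 130.6389279) h1 h2 (by norm_num) (by norm_num) (by norm_num) (by norm_num)
    (by norm_num) (by norm_num) (by norm_num) (by norm_num) (by norm_num) (by norm_num)
    (by norm_num)

lemma conv5 {x : ℝ} (h1 : (0.5612:ℝ) ≤ x) (h2 : x ≤ 0.5913) : 0 < gg2 x :=
  gg2_pos (p := 0.5612) (q := 0.5913) (sl := 0.8064516) (epL := 12.8579511) (epU := 25.7365175)
    (eppL := 264.8185983) h1 h2 (by norm_num) (by norm_num) (by norm_num) (by norm_num)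
    (by norm_num) (by norm_num) (by norm_num) (by norm_num) (by norm_num) (by norm_num)
    (by norm_num)

lemma conv6 {x : ℝ} (h1 : (0.5913:ℝ) ≤ x) (h2 : x ≤ 0.62) : 0 < gg2 x :=
  gg2_pos (p := 0.5913) (q := 0.62) (sl := 0.7846018) (epL := 25.7365107) (epU := 60.50361)
    (eppL := 667.2219616) h1 h2 (by norm_num) (by norm_num) (by norm_num) (by norm_num)
    (by norm_num) (by norm_num) (by norm_num) (by norm_num) (by norm_num) (by norm_num)
    (by norm_num)

lemma gg_cont : ContinuousOn gg (Icc (0.44:ℝ) 0.62) := by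
  intro x hx
  have hx' : x ∈ Ioo (0.4:ℝ) 0.65 := ⟨by linarith [hx.1], by linarith [hx.2]⟩
  exact (gg_hasDeriv hx').differentiableAt.continuousAt.continuousWithinAt

lemma gg_strictConvex : StrictConvexOn ℝ (Icc (0.44:ℝ) 0.62) gg := by
  apply strictConvexOn_of_deriv2_pos (convex_Icc _ _) gg_cont
  intro x hx
  rw [interior_Icc] at hx
  have hx' : x ∈ Ioo (0.4:ℝ) 0.65 := ⟨by linarith [hx.1], by linarith [hx.2]⟩
  have hev : deriv gg =ᶠ[nhds x] gg1 := by
    filter_upwards [Ioo_mem_nhds hx'.1 hx'.2] with y hy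
    exact (gg_hasDeriv hy).deriv
  have h2 : deriv^[2] gg x = gg2 x := by
    have : deriv (deriv gg) x = deriv gg1 x := hev.deriv_eq
    have h3 : deriv gg1 x = gg2 x := (gg1_hasDeriv hx').deriv
    simp only [Function.iterate_succ, Function.iterate_zero, Function.comp_apply, id_eq]
    rw [this, h3]
  rw [h2]
  rcases le_total x 0.47 with h | h
  · exact conv1 hx.1.le h
  rcases le_total x 0.5016 with h' | h'
  · exact conv2 h h'
  rcases le_total x 0.533 with h'' | h''
  · exact conv3 h' h''
  rcases le_total x 0.5612 with h3 | h3
  · exact conv4 h'' h3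
  rcases le_total x 0.5913 with h4 | h4
  · exact conv5 h3 h4
  · exact conv6 h4 hx.2.le

-- global chord lower bound on Icc
lemma gg_min_lb {y : ℝ} (hy : y ∈ Icc (0.44:ℝ) 0.62) : (1.1820545:ℝ) ≤ gg y := by
  have hconv := gg_strictConvex.convexOn
  have m1 : (0.4935:ℝ) ∈ Icc (0.44:ℝ) 0.62 := by norm_num
  have m2 : (0.4945:ℝ) ∈ Icc (0.44:ℝ) 0.62 := by norm_num
  have m3 : (0.498:ℝ) ∈ Icc (0.44:ℝ) 0.62 := by norm_num
  have m4 : (0.5:ℝ) ∈ Icc (0.44:ℝ) 0.62 := by norm_num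
  rcases lt_or_ge y 0.4935 with hy1 | hy1
  · -- left branch : gg y ≥ gg 0.4935
    have hsl := hconv.slope_mono_adjacent hy m2 hy1 (by norm_num)
    -- (gg .4935 - gg y)/(0.4935 - y) ≤ (gg .4945 - gg .4935)/(0.4945 - 0.4935)
    have hd : (0:ℝ) < 0.4935 - y := by linarith
    have hB : (gg 0.4945 - gg 0.4935) / ((0.4945:ℝ) - 0.4935) ≤ 0 := by
      apply div_nonpos_of_nonpos_of_nonneg _ (by norm_num)
      linarith [pt1, pt2]
    have hA := (div_le_iff₀ hd).mp (le_trans hsl hB)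
    rw [zero_mul] at hA
    linarith [pt1]
  rcases le_or_gt y 0.498 with hy2 | hy2
  · -- middle : slope (y, 0.498, 0.5)
    rcases eq_or_lt_of_le hy2 with rfl | hy2'
    · linarith [pt3]
    · have hsl := hconv.slope_mono_adjacent hy m4 hy2' (by norm_num)
      have hd : (0:ℝ) < 0.498 - y := by linarith
      have hB : (gg 0.5 - gg 0.498) / ((0.5:ℝ) - 0.498) ≤ 0.153 := by
        rw [div_le_iff₀ (by norm_num)]
        linarith [pt3, pt4]
      have hA := (div_le_iff₀ hd).mp (le_trans hsl hB)
      have : gg 0.498 - gg y ≤ 0.153 * (0.498 - y) := hA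
      have hrange : 0.498 - y ≤ 0.0045 := by linarith
      nlinarith [pt3]
  · -- right branch : slope (0.4945, 0.498, y)
    have hsl := hconv.slope_mono_adjacent m2 hy (by norm_num) hy2
    have hL : (0:ℝ) ≤ (gg 0.498 - gg 0.4945) / ((0.498:ℝ) - 0.4945) := by
      apply div_nonneg _ (by norm_num)
      linarith [pt2, pt3]
    have := le_trans hL hsl
    have hd : (0:ℝ) < y - 0.498 := by linarith
    have := (le_div_iff₀ hd).mp this
    rw [zero_mul] at this
    linarith [pt3]

lemma gg_exists_min : ∃ z ∈ Icc (0.44:ℝ) 0.62, ∀ y ∈ Icc (0.44:ℝ) 0.62, gg z ≤ gg y := by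
  obtain ⟨z, hz, hmin⟩ := isCompact_Icc.exists_isMinOn (by norm_num : (Icc (0.44:ℝ) 0.62).Nonempty) gg_cont
  exact ⟨z, hz, fun y hy => hmin hy⟩

/-- With `f_c(x) = −√(1−x²) + c·exp(−(0.02/(x+1/√2)² + 0.02/(x−1/√2)²))`, there
is a value `c > 0` (approximately `1.18264`) for which the graph of `f_c` meets
the curve `y = √(1−x²) − 2x` in exactly one point with `0 < x < 1/√2`. -/
theorem unique_tangency_value (f : ℝ → ℝ → ℝ)
    (hf : ∀ c x : ℝ, f c x =
      -Real.sqrt (1 - x ^ 2) +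
        c * Real.exp (-(0.02 / (x + 1 / Real.sqrt 2) ^ 2 +
                        0.02 / (x - 1 / Real.sqrt 2) ^ 2))) :
    ∃ c : ℝ, 0 < c ∧ |c - 1.18264| < 0.001 ∧
      ∃! x : ℝ, 0 < x ∧ x < 1 / Real.sqrt 2 ∧
        f c x = Real.sqrt (1 - x ^ 2) - 2 * x := by
  obtain ⟨z, hz, hmin⟩ := gg_exists_min
  refine ⟨gg z, ?_, ?_, ?_⟩
  · linarith [gg_min_lb hz]
  · rw [abs_lt]
    constructor
    · linarith [gg_min_lb hz]
    · linarith [hmin 0.4945 (by norm_num), pt2]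
  · -- the equation f c x = √(1-x²) - 2x is equivalent to gg x = c
    have key : ∀ x c : ℝ, (f c x = Real.sqrt (1 - x ^ 2) - 2 * x) ↔ gg x = c := by
      intro x c
      rw [hf c x]
      have hE := Real.exp_pos (ee x)
      have hrw : Real.exp (-(0.02 / (x + 1 / Real.sqrt 2) ^ 2 +
          0.02 / (x - 1 / Real.sqrt 2) ^ 2)) = (Real.exp (ee x))⁻¹ := by
        rw [Real.exp_neg, ee, aa]
      rw [hrw]
      constructor
      · intro h
        rw [gg]
        have h2 : c * (Real.exp (ee x))⁻¹ = 2 * Real.sqrt (1 - x ^ 2) - 2 * x - 0 := by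
          linarith
        field_simp at h2
        linarith
      · intro h
        rw [gg] at h
        have : c * (Real.exp (ee x))⁻¹ = 2 * (Real.sqrt (1 - x ^ 2) - x) := by
          rw [← h]
          field_simp
        linarith
    refine ⟨z, ⟨by linarith [hz.1], ?_, (key z (gg z)).mpr rfl⟩, ?_⟩
    · have : z < aa := by linarith [hz.2, aa_lb]
      rw [aa] at this
      exact this
    · rintro y ⟨hy1, hy2, hyeq⟩
      have hgy : gg y = gg z := (key y (gg z)).mp hyeq
      have hyaa : y < aa := by rw [aa]; exact hy2
      have hcz : gg z ≤ 1.182667 := by linarith [hmin 0.4945 (by norm_num), pt2]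
      -- y must lie in the convexity window
      rcases lt_or_ge y 0.44 with hcase | hcase
      · exfalso
        rcases le_total y 0.352 with h | h
        · linarith [left1 hy1.le h]
        rcases le_total y 0.41 with h' | h'
        · linarith [left2 h h']
        rcases le_total y 0.43 with h'' | h''
        · linarith [left3 h' h'']
        · linarith [left4 h'' hcase.le]
      rcases le_or_gt y 0.62 with hcase2 | hcase2
      · -- y in Icc; minimizer unique by strict convexity
        have hymem : y ∈ Icc (0.44:ℝ) 0.62 := ⟨hcase, hcase2⟩
        by_contra hne
        have hmid : (1/2 : ℝ) • y + (1/2 : ℝ) • z ∈ Icc (0.44:ℝ) 0.62 :=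
          (convex_Icc _ _) hymem hz (by norm_num) (by norm_num) (by norm_num)
        have := gg_strictConvex.2 hymem hz hne (by norm_num : (0:ℝ) < 1/2)
          (by norm_num : (0:ℝ) < 1/2) (by norm_num)
        rw [hgy] at this
        have hge := hmin _ hmid
        simp only [smul_eq_mul] at this hge
        linarith
      · exfalso
        linarith [gg_tail hcase2.le hyaa]
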